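/- arXiv:1210.1862 — 2 statements merged into one kernel-verified Lean document; each statement's English description precedes it below -/
import Mathlib

section
/- Let Ψ: [0,∞) → ℝ be differentiable and convex with nondecreasing derivative. Then for all s > 1 and x > 1, Ψ(s·x) − s·Ψ(x) ≥ (s−1)·(Ψ'(x) − Ψ'(1)). -/
open Set Filter

/-- Key inequality in the proof of Lemma 3.1:
for `Ψ` differentiable and convex on `[0,∞)` (so `Ψ'` is nondecreasing) with `Ψ 0 = 0`,
and `s > 1`, `x > 1`, we have `Ψ (s*x) - s * Ψ x ≥ (s - 1) * (Ψ' x - Ψ' 1)`. -/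
theorem convex_scaling_deriv_lower_bound
    (Ψ : ℝ → ℝ)
    (hconv : ConvexOn ℝ (Set.Ici (0 : ℝ)) Ψ)
    (hdiff : ∀ x ∈ Set.Ici (0 : ℝ), DifferentiableAt ℝ Ψ x)
    (hderiv_mono : MonotoneOn (deriv Ψ) (Set.Ici (0 : ℝ)))
    (h0 : Ψ 0 = 0)
    (s x : ℝ) (hs : 1 < s) (hx : 1 < x) :
    (s - 1) * (deriv Ψ x - deriv Ψ 1) ≤ Ψ (s * x) - s * Ψ x := by
  have hx0 : (0 : ℝ) < x := lt_trans one_pos hx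
  have hsx : x < s * x := by nlinarith
  have hcont : ∀ a b : ℝ, 0 ≤ a → ContinuousOn Ψ (Set.Icc a b) := by
    intro a b ha
    intro y hy
    exact (hdiff y (le_trans ha hy.1)).continuousAt.continuousWithinAt
  have hdiffOn : ∀ a b : ℝ, 0 ≤ a → DifferentiableOn ℝ Ψ (Set.Ioo a b) := by
    intro a b ha y hy
    exact (hdiff y (le_of_lt (lt_of_le_of_lt ha hy.1))).differentiableWithinAt
  -- MVT on [0,1]
  obtain ⟨c₁, hc₁, hc₁'⟩ := exists_deriv_eq_slope Ψ (one_pos) (hcont 0 1 le_rfl)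
    (hdiffOn 0 1 le_rfl)
  -- MVT on [1,x]
  obtain ⟨c₂, hc₂, hc₂'⟩ := exists_deriv_eq_slope Ψ hx (hcont 1 x zero_le_one)
    (hdiffOn 1 x zero_le_one)
  -- MVT on [x, s*x]
  obtain ⟨c₃, hc₃, hc₃'⟩ := exists_deriv_eq_slope Ψ hsx (hcont x (s*x) hx0.le)
    (hdiffOn x (s*x) hx0.le)
  have h1 : deriv Ψ c₁ ≤ deriv Ψ 1 :=
    hderiv_mono (Set.mem_Ici.mpr hc₁.1.le) (Set.mem_Ici.mpr zero_le_one) hc₁.2.le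
  have h2 : deriv Ψ c₂ ≤ deriv Ψ x :=
    hderiv_mono (Set.mem_Ici.mpr (le_trans zero_le_one hc₂.1.le)) (Set.mem_Ici.mpr hx0.le) hc₂.2.le
  have h3 : deriv Ψ x ≤ deriv Ψ c₃ :=
    hderiv_mono (Set.mem_Ici.mpr hx0.le) (Set.mem_Ici.mpr (le_trans hx0.le hc₃.1.le)) hc₃.1.le
  have e1 : Ψ 1 - Ψ 0 = deriv Ψ c₁ * 1 := by
    field_simp at hc₁' ⊢; linarith
  have e2 : Ψ x - Ψ 1 = deriv Ψ c₂ * (x - 1) := by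
    have hne : x - 1 ≠ 0 := by linarith
    rw [hc₂', div_mul_cancel₀ _ hne]
  have e3 : Ψ (s*x) - Ψ x = deriv Ψ c₃ * (s*x - x) := by
    have hne : s * x - x ≠ 0 := by nlinarith
    rw [hc₃', div_mul_cancel₀ _ hne]
  have hx1 : (0:ℝ) ≤ x - 1 := by linarith
  have hs1 : (0:ℝ) ≤ s - 1 := by linarith
  have b2 : Ψ x - Ψ 1 ≤ deriv Ψ x * (x - 1) := by
    rw [e2]; exact mul_le_mul_of_nonneg_right h2 hx1
  have b3 : deriv Ψ x * (s*x - x) ≤ Ψ (s*x) - Ψ x := by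
    rw [e3]
    exact mul_le_mul_of_nonneg_right h3 (by nlinarith)
  have b1 : Ψ 1 ≤ deriv Ψ 1 := by
    rw [h0] at e1; nlinarith
  nlinarith [mul_le_mul_of_nonneg_left b2 hs1, mul_le_mul_of_nonneg_left b1 hs1]
end

section
/- Let σ₁, σ₂, … be i.i.d. positive-integer-valued random variables with P(σ₁ = n) = φ(n)/n^{1+α} for a slowly varying function φ and α > 0. Let C₁ > 0 and b ∈ (0, 1/2). Then for all sufficiently large n, the probability that the partial sums τ_l = σ₁ + ⋯ + σ_l reach the interval (n − bn, n] within l ≤ C₁ log n steps while every individual gap satisfies σ_i < bn is at most n^{−α/(9b)}. -/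
open MeasureTheory Filter Finset

lemma slow_growth (φ : ℕ → ℝ) (hφpos : ∀ k, 1 ≤ k → 0 < φ k)
    (hhalf : Tendsto (fun k : ℕ => φ ⌊(1/2 : ℝ) * (k : ℝ)⌋₊ / φ k) atTop (nhds 1))
    (ε : ℝ) (hε : 0 < ε) :
    ∃ M : ℝ, 1 ≤ M ∧ ∀ k : ℕ, 1 ≤ k → φ k ≤ M * (k : ℝ) ^ ε := by
  set q : ℝ := (2 : ℝ) ^ ε with hq
  have hq1 : 1 < q := Real.one_lt_rpow_iff_of_pos (by norm_num) |>.mpr (Or.inl ⟨one_lt_two, hε⟩)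
  have hq0 : 0 < q := lt_trans one_pos hq1
  have hratio : ∀ᶠ k : ℕ in atTop, 1 / q < φ ⌊(1/2 : ℝ) * (k : ℝ)⌋₊ / φ k := by
    apply hhalf.eventually_const_lt
    rw [div_lt_one hq0]; exact hq1
  obtain ⟨K₀, hK₀⟩ := hratio.exists_forall_of_atTop
  set K : ℕ := max K₀ 2 with hK
  set M : ℝ := 1 + ∑ j ∈ Finset.Icc 1 K, max (φ j) 0 with hM
  have hM1 : 1 ≤ M := by
    have : (0 : ℝ) ≤ ∑ j ∈ Finset.Icc 1 K, max (φ j) 0 :=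
      Finset.sum_nonneg fun j _ => le_max_right _ _
    simp [hM]; linarith
  have hMbase : ∀ j, 1 ≤ j → j ≤ K → φ j ≤ M := by
    intro j h1 h2
    have hmem : j ∈ Finset.Icc 1 K := Finset.mem_Icc.mpr ⟨h1, h2⟩
    have h3 : max (φ j) 0 ≤ ∑ j ∈ Finset.Icc 1 K, max (φ j) 0 :=
      Finset.single_le_sum (fun j _ => le_max_right (φ j) 0) hmem
    have := le_max_left (φ j) 0
    simp [hM]; linarith
  refine ⟨M, hM1, ?_⟩
  intro k
  induction k using Nat.strong_induction_on with
  | _ k ih =>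
    intro hk1
    have hkpow : (1 : ℝ) ≤ (k : ℝ) ^ ε :=
      Real.one_le_rpow (by exact_mod_cast hk1) hε.le
    by_cases hkK : k ≤ K
    · calc φ k ≤ M := hMbase k hk1 hkK
        _ = M * 1 := (mul_one M).symm
        _ ≤ M * (k : ℝ) ^ ε := by
          apply mul_le_mul_of_nonneg_left hkpow (by linarith)
    · push_neg at hkK
      set j : ℕ := ⌊(1/2 : ℝ) * (k : ℝ)⌋₊ with hj
      have hk2 : 2 ≤ k := le_trans (le_max_right _ _) hkK.le
      have hjr : (j : ℝ) ≤ (1/2 : ℝ) * k := Nat.floor_le (by positivity)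
      have hj1 : 1 ≤ j := by
        apply Nat.le_floor
        have h2k : (2 : ℝ) ≤ (k : ℝ) := by exact_mod_cast hk2
        push_cast
        linarith
      have hjk : j < k := by
        have : (j : ℝ) < k := by
          have hk0 : (0 : ℝ) < k := by positivity
          linarith
        exact_mod_cast this
      have hratk := hK₀ k (le_trans (le_max_left _ _) hkK.le)
      have hφk : 0 < φ k := hφpos k hk1
      have hφj : 0 < φ j := hφpos j hj1
      have hstep : φ k ≤ q * φ j := by
        have h2 := (div_lt_div_iff₀ hq0 hφk).mp hratk
        nlinarith
      have hjb : φ j ≤ M * (j : ℝ) ^ ε := ih j hjk hj1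
      have hjpow : (j : ℝ) ^ ε ≤ ((1/2 : ℝ) * k) ^ ε :=
        Real.rpow_le_rpow (by positivity) hjr hε.le
      have hhalfpow : ((1/2 : ℝ) * k) ^ ε = (1/2 : ℝ) ^ ε * (k : ℝ) ^ ε :=
        Real.mul_rpow (by norm_num) (by positivity)
      have hqhalf : q * (1/2 : ℝ) ^ ε = 1 := by
        rw [hq, ← Real.mul_rpow (by norm_num) (by norm_num)]
        norm_num
      calc φ k ≤ q * φ j := hstep
        _ ≤ q * (M * (j : ℝ) ^ ε) := by nlinarith
        _ ≤ q * (M * ((1/2 : ℝ) ^ ε * (k : ℝ) ^ ε)) := by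
            rw [← hhalfpow]
            have := mul_le_mul_of_nonneg_left hjpow (by linarith : (0:ℝ) ≤ M)
            nlinarith
        _ = (q * (1/2 : ℝ) ^ ε) * (M * (k : ℝ) ^ ε) := by ring
        _ = M * (k : ℝ) ^ ε := by rw [hqhalf, one_mul]
lemma tail_bound {Ω : Type*} [MeasurableSpace Ω] (μ : Measure Ω)
    (f : Ω → ℕ)
    (α ε M : ℝ) (hα : 0 < α) (hε : 0 < ε) (hεα : ε < 1 + α) (hM : 1 ≤ M)
    (φ : ℕ → ℝ) (hφM : ∀ k, 1 ≤ k → φ k ≤ M * (k : ℝ) ^ ε)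
    (hφnn : ∀ k, 1 ≤ k → 0 < φ k)
    (hlaw : ∀ k : ℕ, 1 ≤ k → μ {x | f x = k} = ENNReal.ofReal (φ k / (k : ℝ) ^ (1 + α)))
    (t n : ℕ) (ht : 1 ≤ t) :
    μ (f ⁻¹' Set.Icc t n)
      ≤ ENNReal.ofReal (((n : ℝ) + 1) * (M * (t : ℝ) ^ (ε - (1 + α)))) := by
  have ht0 : (0 : ℝ) < t := by exact_mod_cast ht
  have hcover : f ⁻¹' Set.Icc t n ⊆ ⋃ k ∈ Finset.Icc t n, {x | f x = k} := by
    intro x hx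
    exact Set.mem_biUnion (Finset.mem_Icc.mpr ⟨hx.1, hx.2⟩) rfl
  have hterm : ∀ k ∈ Finset.Icc t n,
      μ {x | f x = k} ≤ ENNReal.ofReal (M * (t : ℝ) ^ (ε - (1 + α))) := by
    intro k hk
    rw [Finset.mem_Icc] at hk
    have hk1 : 1 ≤ k := le_trans ht hk.1
    have hk0 : (0 : ℝ) < k := by exact_mod_cast hk1
    rw [hlaw k hk1]
    apply ENNReal.ofReal_le_ofReal
    have h1 : φ k / (k : ℝ) ^ (1 + α) ≤ M * (k : ℝ) ^ ε / (k : ℝ) ^ (1 + α) := by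
      gcongr
      exact hφM k hk1
    have h2 : M * (k : ℝ) ^ ε / (k : ℝ) ^ (1 + α) = M * (k : ℝ) ^ (ε - (1 + α)) := by
      rw [Real.rpow_sub hk0]; ring
    have h3 : (k : ℝ) ^ (ε - (1 + α)) ≤ (t : ℝ) ^ (ε - (1 + α)) := by
      apply Real.rpow_le_rpow_of_nonpos ht0 (by exact_mod_cast hk.1) (by linarith)
    calc φ k / (k : ℝ) ^ (1 + α) ≤ M * (k : ℝ) ^ (ε - (1 + α)) := by rw [← h2]; exact h1
      _ ≤ M * (t : ℝ) ^ (ε - (1 + α)) := by nlinarith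
  calc μ (f ⁻¹' Set.Icc t n) ≤ μ (⋃ k ∈ Finset.Icc t n, {x | f x = k}) := measure_mono hcover
    _ ≤ ∑ k ∈ Finset.Icc t n, μ {x | f x = k} := measure_biUnion_finset_le _ _
    _ ≤ ∑ _k ∈ Finset.Icc t n, ENNReal.ofReal (M * (t : ℝ) ^ (ε - (1 + α))) :=
        Finset.sum_le_sum hterm
    _ = (Finset.Icc t n).card * ENNReal.ofReal (M * (t : ℝ) ^ (ε - (1 + α))) := by
        rw [Finset.sum_const, nsmul_eq_mul]
    _ ≤ ENNReal.ofReal ((n : ℝ) + 1) * ENNReal.ofReal (M * (t : ℝ) ^ (ε - (1 + α))) := by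
        apply mul_le_mul_left
        rw [← ENNReal.ofReal_natCast ((Finset.Icc t n).card)]
        apply ENNReal.ofReal_le_ofReal
        rw [Nat.card_Icc]
        have : (n + 1 - t : ℕ) ≤ n + 1 := Nat.sub_le _ _
        calc ((n + 1 - t : ℕ) : ℝ) ≤ ((n + 1 : ℕ) : ℝ) := by exact_mod_cast this
          _ = (n : ℝ) + 1 := by push_cast; ring
    _ = ENNReal.ofReal (((n : ℝ) + 1) * (M * (t : ℝ) ^ (ε - (1 + α)))) :=
        (ENNReal.ofReal_mul (by positivity)).symm
open Asymptotics in
lemma eventually_affine_log_le (a c d : ℝ) (hd : 0 < d) :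
    ∀ᶠ n : ℕ in atTop, a * Real.log n + c ≤ (n : ℝ) ^ d := by
  have h1 : (fun x : ℝ => a * Real.log x + c) =o[atTop] fun x : ℝ => x ^ d := by
    apply Asymptotics.IsLittleO.add
    · exact (isLittleO_log_rpow_atTop hd).const_mul_left a
    · exact isLittleO_const_left.2 <| Or.inr <|
        (tendsto_abs_atTop_atTop).comp (tendsto_rpow_atTop hd)
  have h2 : Tendsto (fun x : ℝ => (a * Real.log x + c) / x ^ d) atTop (nhds 0) :=
    h1.tendsto_div_nhds_zero
  have h3 : ∀ᶠ x : ℝ in atTop, (a * Real.log x + c) / x ^ d < 1 :=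
    h2.eventually_lt_const one_pos
  have h4 : ∀ᶠ x : ℝ in atTop, a * Real.log x + c ≤ x ^ d := by
    filter_upwards [h3, eventually_gt_atTop (0 : ℝ)] with x hx hx0
    have hxd : (0 : ℝ) < x ^ d := Real.rpow_pos_of_pos hx0 d
    calc a * Real.log x + c ≤ 1 * x ^ d := by
          rw [div_lt_iff₀ hxd] at hx; linarith
      _ = x ^ d := one_mul _
  exact tendsto_natCast_atTop_atTop.eventually h4



set_option maxHeartbeats 1000000 in
/-- Lemma 2.3: for i.i.d. gaps `σ i` with `P(σ = k) = φ(k)/k^(1+α)` (`φ` slowly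
varying, `α > 0`), `C₁ > 0` and `b ∈ (0, 1/2)`, for all sufficiently large `n` the
probability that the partial sums reach `(n - bn, n]` within `C₁ log n` steps while
every gap is `< bn` is at most `n^(-α/(9b))`. -/
theorem renewal_no_big_gap_bound
    {Ω : Type*} [MeasurableSpace Ω] (μ : Measure Ω) [IsProbabilityMeasure μ]
    (σ : ℕ → Ω → ℕ) (hmeas : ∀ i, Measurable (σ i))
    (hindep : ProbabilityTheory.iIndepFun σ μ)
    (hident : ∀ i j, ProbabilityTheory.IdentDistrib (σ i) (σ j) μ μ)
    (α : ℝ) (hα : 0 < α)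
    (φ : ℕ → ℝ) (hφpos : ∀ k, 1 ≤ k → 0 < φ k)
    (hφslow : ∀ c : ℝ, 0 < c →
      Tendsto (fun k : ℕ => φ ⌊c * (k : ℝ)⌋₊ / φ k) atTop (nhds 1))
    (hlaw : ∀ k : ℕ, 1 ≤ k →
      μ {x | σ 0 x = k} = ENNReal.ofReal (φ k / (k : ℝ) ^ (1 + α)))
    (hpos : ∀ i, ∀ᵐ x ∂μ, 1 ≤ σ i x)
    (C₁ b : ℝ) (hC₁ : 0 < C₁) (hb : b ∈ Set.Ioo (0 : ℝ) (1/2)) :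
    ∃ N : ℕ, ∀ n : ℕ, N ≤ n →
      μ {x | ∃ l : ℕ, (l : ℝ) ≤ C₁ * Real.log n ∧
          (n : ℝ) - b * n < (∑ i ∈ Finset.range l, (σ i x : ℝ)) ∧
          (∑ i ∈ Finset.range l, (σ i x : ℝ)) ≤ (n : ℝ) ∧
          ∀ i < l, (σ i x : ℝ) < b * n}
        ≤ ENNReal.ofReal ((n : ℝ) ^ (-(α / (9 * b)))) := by
  obtain ⟨hb0, hb2⟩ := hb
  -- parameters
  set r : ℕ := ⌊1/(8*b)⌋₊ + 1 with hrdef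
  have hr1 : 1 ≤ r := Nat.le_add_left 1 _
  have hr0 : (0:ℝ) < r := by exact_mod_cast hr1
  have hrb : 1/(8*b) < (r : ℝ) := by
    have := Nat.lt_floor_add_one (1/(8*b))
    push_cast [hrdef]
    push_cast at this
    linarith
  have hrb' : (⌊1/(8*b)⌋₊ : ℝ) ≤ 1/(8*b) := Nat.floor_le (by positivity)
  have hδpos : 0 < (r:ℝ)*α - α/(9*b) := by
    have h1 : α/(9*b) < α/(8*b) := by
      apply div_lt_div_of_pos_left hα (by positivity) (by linarith)
    have h2 : α/(8*b) = (1/(8*b))*α := by ring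
    nlinarith
  set δ : ℝ := (r:ℝ)*α - α/(9*b) with hδdef
  set ε : ℝ := min (δ/(2*(r:ℝ)*(4+α))) 1 with hεdef
  have hε0 : 0 < ε := lt_min (by positivity) one_pos
  have hε1 : ε ≤ 1 := min_le_right _ _
  have hεδ : ε ≤ δ/(2*(r:ℝ)*(4+α)) := min_le_left _ _
  have hεα : ε < 1+α := by linarith
  obtain ⟨M, hM1, hMb⟩ := slow_growth φ hφpos (hφslow (1/2) (by norm_num)) ε hε0
  set e : ℝ := ε - (1+α) with hedef
  have he0 : e < 0 := by simp only [hedef]; linarith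
  -- the eventual facts
  have hlogt : Tendsto (fun n : ℕ => Real.log n) atTop atTop :=
    Real.tendsto_log_atTop.comp tendsto_natCast_atTop_atTop
  have ev1 : ∀ᶠ n : ℕ in atTop, 3 ≤ n := eventually_ge_atTop 3
  have ev2 : ∀ᶠ n : ℕ in atTop, 1 ≤ Real.log n := hlogt.eventually_ge_atTop 1
  have ev3 : ∀ᶠ n : ℕ in atTop, C₁ * Real.log n + 1 ≤ (n : ℝ) ^ ε :=
    eventually_affine_log_le C₁ 1 ε hε0
  have ev4 : ∀ᶠ n : ℕ in atTop, (8*C₁) * Real.log n + 0 ≤ (n : ℝ) ^ ε :=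
    eventually_affine_log_le (8*C₁) 0 ε hε0
  have ev5 : ∀ᶠ n : ℕ in atTop, 0 * Real.log n + M ≤ (n : ℝ) ^ ε :=
    eventually_affine_log_le 0 M ε hε0
  have ev6 : ∀ᶠ n : ℕ in atTop, 0 * Real.log n + 2^r ≤ (n : ℝ) ^ (δ/2) :=
    eventually_affine_log_le 0 (2^r) (δ/2) (by positivity)
  obtain ⟨N, hN⟩ :=
    ((((ev1.and ev2).and (ev3.and ev4)).and (ev5.and ev6)).exists_forall_of_atTop)
  refine ⟨N, fun n hn => ?_⟩
  obtain ⟨⟨⟨hn3, hlog1⟩, ⟨hev3, hev4⟩⟩, ⟨hev5, hev6⟩⟩ := hN n hn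
  rw [zero_mul, zero_add] at hev5 hev6
  rw [add_zero] at hev4
  -- notation
  have hn3' : (3:ℝ) ≤ (n:ℝ) := by exact_mod_cast hn3
  have hn0 : (0:ℝ) < n := by linarith
  have hn1 : (1:ℝ) ≤ n := by linarith
  set L : ℝ := C₁ * Real.log n with hLdef
  have hL0 : 0 < L := mul_pos hC₁ (by linarith)
  set s : ℝ := (n:ℝ)/(8*L) with hsdef
  have hs0 : 0 < s := by positivity
  set t : ℕ := ⌈s⌉₊ with htdef
  have ht1 : 1 ≤ t := Nat.one_le_iff_ne_zero.mpr (Nat.ceil_pos.mpr hs0).ne'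
  set m : ℕ := ⌊L⌋₊ + 1 with hmdef
  set B : Set ℕ := Set.Icc t n with hBdef
  have hBmeas : MeasurableSet B := B.to_countable.measurableSet
  set A : ℕ → Set Ω := fun i => σ i ⁻¹' B with hAdef
  set 𝒮 : Finset (Finset ℕ) := Finset.powersetCard r (Finset.range m) with h𝒮def
  -- inclusion
  have hincl : {x | ∃ l : ℕ, (l : ℝ) ≤ C₁ * Real.log n ∧
          (n : ℝ) - b * n < (∑ i ∈ Finset.range l, (σ i x : ℝ)) ∧
          (∑ i ∈ Finset.range l, (σ i x : ℝ)) ≤ (n : ℝ) ∧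
          ∀ i < l, (σ i x : ℝ) < b * n} ⊆ ⋃ S ∈ 𝒮, ⋂ i ∈ S, A i := by
    rintro x ⟨l, hlL, hlo, hhi, hsm⟩
    have hlm : l ≤ m := by
      have : l ≤ ⌊L⌋₊ := Nat.le_floor hlL
      omega
    set T : Finset ℕ := (Finset.range l).filter (fun i => s ≤ (σ i x : ℝ)) with hTdef
    have hTcard : r ≤ T.card := by
      by_contra hcon
      push_neg at hcon
      have hcard' : (T.card : ℝ) ≤ 1/(8*b) := by
        have h1 : T.card ≤ ⌊1/(8*b)⌋₊ := by omega
        exact le_trans (by exact_mod_cast h1) hrb'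
      have hsumT : ∑ i ∈ T, (σ i x : ℝ) ≤ (T.card : ℝ) * (b*(n:ℝ)) := by
        have := Finset.sum_le_card_nsmul T (fun i => (σ i x : ℝ)) (b*(n:ℝ))
          (fun i hi => (hsm i (Finset.mem_range.mp (Finset.mem_filter.mp hi).1)).le)
        rwa [nsmul_eq_mul] at this
      set T' : Finset ℕ := (Finset.range l).filter (fun i => ¬ s ≤ (σ i x : ℝ)) with hT'def
      have hsumT' : ∑ i ∈ T', (σ i x : ℝ) ≤ (l : ℝ) * s := by
        have h1 := Finset.sum_le_card_nsmul T' (fun i => (σ i x : ℝ)) s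
          (fun i hi => (not_le.mp (Finset.mem_filter.mp hi).2).le)
        rw [nsmul_eq_mul] at h1
        have h2 : T'.card ≤ l := by
          simpa using Finset.card_filter_le (Finset.range l) _
        have h3 : (T'.card : ℝ) ≤ (l : ℝ) := by exact_mod_cast h2
        nlinarith
      have hsplit : ∑ i ∈ T, (σ i x : ℝ) + ∑ i ∈ T', (σ i x : ℝ)
          = ∑ i ∈ Finset.range l, (σ i x : ℝ) :=
        Finset.sum_filter_add_sum_filter_not (Finset.range l) _ _
      have hTb : (T.card : ℝ) * (b*(n:ℝ)) ≤ (n:ℝ)/8 := by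
        have : (T.card : ℝ) * (b*(n:ℝ)) ≤ (1/(8*b)) * (b*(n:ℝ)) := by
          apply mul_le_mul_of_nonneg_right hcard' (by positivity)
        calc (T.card : ℝ) * (b*(n:ℝ)) ≤ (1/(8*b)) * (b*(n:ℝ)) := this
          _ = (n:ℝ)/8 := by field_simp
      have hT'b : (l : ℝ) * s ≤ (n:ℝ)/8 := by
        have h1 : (l : ℝ) * s ≤ L * s := mul_le_mul_of_nonneg_right hlL hs0.le
        have h2 : L * s = (n:ℝ)/8 := by
          rw [hsdef]; field_simp
        linarith
      have hbn : b * (n:ℝ) < (n:ℝ)/2 := by nlinarith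
      linarith
    obtain ⟨S, hST, hScard⟩ := Finset.exists_subset_card_eq hTcard
    have hS𝒮 : S ∈ 𝒮 := by
      rw [h𝒮def, Finset.mem_powersetCard]
      refine ⟨hST.trans ((Finset.filter_subset _ _).trans (Finset.range_subset_range.mpr hlm)), hScard⟩
    refine Set.mem_biUnion hS𝒮 ?_
    simp only [Set.mem_iInter]
    intro i hi
    have hiT := hST hi
    rw [hTdef, Finset.mem_filter] at hiT
    obtain ⟨hirange, his⟩ := hiT
    have hile : (σ i x : ℝ) ≤ (n:ℝ) := by
      have h1 : (σ i x : ℝ) ≤ ∑ j ∈ Finset.range l, (σ j x : ℝ) :=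
        Finset.single_le_sum (f := fun j => (σ j x : ℝ)) (fun j _ => Nat.cast_nonneg _) hirange
      linarith
    constructor
    · exact Nat.ceil_le.mpr his
    · exact_mod_cast hile
  -- product formula
  have hAeq : ∀ i, μ (A i) = μ (A 0) := fun i => (hident i 0).measure_mem_eq hBmeas
  have hprod : ∀ S ∈ 𝒮, μ (⋂ i ∈ S, A i) = μ (A 0) ^ r := by
    intro S hS
    rw [h𝒮def, Finset.mem_powersetCard] at hS
    rw [hindep.meas_biInter (fun i _ => ⟨B, hBmeas, rfl⟩)]
    calc ∏ i ∈ S, μ (A i) = ∏ _i ∈ S, μ (A 0) := Finset.prod_congr rfl (fun i _ => hAeq i)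
      _ = μ (A 0) ^ S.card := Finset.prod_const _
      _ = μ (A 0) ^ r := by rw [hS.2]
  -- tail bound
  set Q : ℝ := ((n : ℝ) + 1) * (M * (t : ℝ) ^ e) with hQdef
  have hQ0 : 0 ≤ Q := by positivity
  have hp : μ (A 0) ≤ ENNReal.ofReal Q :=
    tail_bound μ (σ 0) α ε M hα hε0 hεα hM1 φ hMb hφpos hlaw t n ht1
  -- the real-number estimate
  have hreal : ((m : ℝ) * Q) ^ r ≤ (n : ℝ) ^ (-(α / (9 * b))) := by
    have hm1 : (m : ℝ) ≤ L + 1 := by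
      rw [hmdef]
      push_cast
      have := Nat.floor_le hL0.le
      linarith
    have hts : (t : ℝ) ^ e ≤ s ^ e :=
      Real.rpow_le_rpow_of_nonpos hs0 (Nat.le_ceil s) he0.le
    have hsn : (n:ℝ) ^ (1 - ε) ≤ s := by
      have h8L : 0 < 8 * L := by linarith
      have h1 : (n:ℝ)/(n:ℝ)^ε ≤ s := by
        rw [hsdef]
        apply div_le_div_of_nonneg_left hn0.le h8L
        calc 8 * L = (8*C₁) * Real.log n := by rw [hLdef]; ring
          _ ≤ (n:ℝ)^ε := hev4
      calc (n:ℝ) ^ (1-ε) = (n:ℝ)^(1:ℝ) / (n:ℝ)^ε := Real.rpow_sub hn0 1 ε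
        _ = (n:ℝ)/(n:ℝ)^ε := by rw [Real.rpow_one]
        _ ≤ s := h1
    have hse : s ^ e ≤ (n:ℝ) ^ ((1-ε)*e) := by
      have h1 : s ^ e ≤ ((n:ℝ) ^ (1-ε)) ^ e :=
        Real.rpow_le_rpow_of_nonpos (Real.rpow_pos_of_pos hn0 _) hsn he0.le
      rwa [← Real.rpow_mul hn0.le] at h1
    have hQb : (m : ℝ) * Q ≤ 2 * (n:ℝ) ^ (1 + 2*ε + (1-ε)*e) := by
      have h1 : (m:ℝ) * Q ≤ ((n:ℝ)^ε) * (((n:ℝ)+1) * ((n:ℝ)^ε * (n:ℝ)^((1-ε)*e))) := by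
        have hmε : (m:ℝ) ≤ (n:ℝ)^ε := le_trans hm1 (by linarith [hev3, hLdef.le, hLdef.ge])
        have hte : (t:ℝ)^e ≤ (n:ℝ)^((1-ε)*e) := le_trans hts hse
        have hMt : M * (t:ℝ)^e ≤ (n:ℝ)^ε * (n:ℝ)^((1-ε)*e) := by
          apply mul_le_mul hev5 hte (by positivity) (by positivity)
        have hQ1 : Q ≤ ((n:ℝ)+1) * ((n:ℝ)^ε * (n:ℝ)^((1-ε)*e)) := by
          apply mul_le_mul_of_nonneg_left hMt (by positivity)
        exact mul_le_mul hmε hQ1 hQ0 (by positivity)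
      have h2 : ((n:ℝ)^ε) * (((n:ℝ)+1) * ((n:ℝ)^ε * (n:ℝ)^((1-ε)*e)))
          ≤ 2 * (n:ℝ) ^ (1 + 2*ε + (1-ε)*e) := by
        have hn1' : (n:ℝ) + 1 ≤ 2 * (n:ℝ) := by linarith
        have hexp : (n:ℝ) ^ (1 + 2*ε + (1-ε)*e)
            = (n:ℝ)^ε * ((n:ℝ) * ((n:ℝ)^ε * (n:ℝ)^((1-ε)*e))) := by
          rw [show (1 + 2*ε + (1-ε)*e) = ε + (1 + (ε + (1-ε)*e)) by ring,
            Real.rpow_add hn0, Real.rpow_add hn0, Real.rpow_add hn0, Real.rpow_one]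
        rw [hexp]
        have hX : 0 < (n:ℝ)^ε * (n:ℝ)^((1-ε)*e) := by positivity
        have hY : 0 < (n:ℝ)^ε := by positivity
        nlinarith [mul_pos hY hX]
      linarith
    have hu : (1 + 2*ε + (1-ε)*e) * r ≤ -(α/(9*b)) - δ/2 := by
      have h1 : 1 + 2*ε + (1-ε)*e ≤ -α + ε*(4+α) := by
        rw [hedef]; nlinarith
      have h2 : (1 + 2*ε + (1-ε)*e) * r ≤ (-α + ε*(4+α)) * r := by
        apply mul_le_mul_of_nonneg_right h1 (by positivity)
      have h3 : ε * (4+α) * r ≤ δ/2 := by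
        have := mul_le_mul_of_nonneg_right hεδ (by positivity : (0:ℝ) ≤ (4+α)*r)
        calc ε * (4+α) * r = ε * ((4+α)*r) := by ring
          _ ≤ δ/(2*(r:ℝ)*(4+α)) * ((4+α)*r) := this
          _ = δ/2 := by field_simp
      have h4 : -(α/(9*b)) - δ/2 = -(α*r) + δ/2 := by
        rw [hδdef]; ring
      nlinarith
    calc ((m:ℝ) * Q) ^ r ≤ (2 * (n:ℝ) ^ (1 + 2*ε + (1-ε)*e)) ^ r := by
          apply pow_le_pow_left₀ (by positivity) hQb
      _ = 2^r * ((n:ℝ) ^ (1 + 2*ε + (1-ε)*e)) ^ r := mul_pow _ _ _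
      _ = 2^r * (n:ℝ) ^ ((1 + 2*ε + (1-ε)*e) * r) := by
          rw [← Real.rpow_natCast ((n:ℝ) ^ (1 + 2*ε + (1-ε)*e)) r, ← Real.rpow_mul hn0.le]
      _ ≤ (n:ℝ)^(δ/2) * (n:ℝ) ^ (-(α/(9*b)) - δ/2) := by
          apply mul_le_mul hev6 (Real.rpow_le_rpow_of_exponent_le hn1 hu) (by positivity)
            (by positivity)
      _ = (n:ℝ) ^ (-(α/(9*b))) := by
          rw [← Real.rpow_add hn0]; ring_nf
  -- putting everything together
  calc μ {x | ∃ l : ℕ, (l : ℝ) ≤ C₁ * Real.log n ∧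
          (n : ℝ) - b * n < (∑ i ∈ Finset.range l, (σ i x : ℝ)) ∧
          (∑ i ∈ Finset.range l, (σ i x : ℝ)) ≤ (n : ℝ) ∧
          ∀ i < l, (σ i x : ℝ) < b * n}
      ≤ μ (⋃ S ∈ 𝒮, ⋂ i ∈ S, A i) := measure_mono hincl
    _ ≤ ∑ S ∈ 𝒮, μ (⋂ i ∈ S, A i) := measure_biUnion_finset_le _ _
    _ = ∑ _S ∈ 𝒮, μ (A 0) ^ r := Finset.sum_congr rfl hprod
    _ = (𝒮.card : ENNReal) * μ (A 0) ^ r := by rw [Finset.sum_const, nsmul_eq_mul]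
    _ ≤ ((m^r : ℕ) : ENNReal) * ENNReal.ofReal Q ^ r := by
        apply mul_le_mul'
        · rw [h𝒮def, Finset.card_powersetCard, Finset.card_range]
          exact_mod_cast Nat.cast_le.mpr (Nat.choose_le_pow m r)
        · exact pow_le_pow_left' hp r
    _ = ENNReal.ofReal (((m:ℝ) * Q) ^ r) := by
        have h1 : ((m^r : ℕ) : ENNReal) = ENNReal.ofReal ((m:ℝ)^r) := by
          rw [← ENNReal.ofReal_natCast (m^r)]; norm_num
        rw [h1, ← ENNReal.ofReal_pow hQ0, ← ENNReal.ofReal_mul (by positivity), ← mul_pow]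
    _ ≤ ENNReal.ofReal ((n : ℝ) ^ (-(α / (9 * b)))) := ENNReal.ofReal_le_ofReal hreal
end
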